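/- For every real x with |x| < π/3 (so that 2cos x − 1 > 0) and all y, z ∈ ℝ, the following identity holds: z² − y² − 2y + ((4 − 2cos x)/(2cos x − 1)²)·y² + (4 sin x/(2cos x − 1))·y·z − (1 − 2cos x) = (z + (2 sin x/(2cos x − 1))·y)² + (y − (2cos x − 1))²/(2cos x − 1). In particular the left-hand side is nonnegative. -/

import Mathlib

open Real

theorem stmt_3 (x y z : ℝ) (hx : |x| < Real.pi / 3) :
    (z^2 - y^2 - 2*y + ((4 - 2*Real.cos x)/(2*Real.cos x - 1)^2)*y^2
        + (4*Real.sin x/(2*Real.cos x - 1))*y*z - (1 - 2*Real.cos x)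
      = (z + (2*Real.sin x/(2*Real.cos x - 1))*y)^2
        + (y - (2*Real.cos x - 1))^2/(2*Real.cos x - 1))
    ∧ 0 ≤ z^2 - y^2 - 2*y + ((4 - 2*Real.cos x)/(2*Real.cos x - 1)^2)*y^2
        + (4*Real.sin x/(2*Real.cos x - 1))*y*z - (1 - 2*Real.cos x) := by
  have hc : (1:ℝ)/2 < Real.cos x := by
    have h1 : Real.cos (π/3) < Real.cos |x| ∨ x = 0 := by
      rcases eq_or_ne x 0 with h | h
      · exact Or.inr h
      · left
        apply Real.cos_lt_cos_of_nonneg_of_le_pi (abs_nonneg x)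
        · linarith [Real.pi_pos]
        · exact hx
    rcases h1 with h | h
    · rw [Real.cos_pi_div_three] at h
      rwa [Real.cos_abs] at h
    · simp [h]; norm_num
  have hd : (0:ℝ) < 2*Real.cos x - 1 := by linarith
  have hd' : (2*Real.cos x - 1) ≠ 0 := ne_of_gt hd
  have hs := Real.sin_sq_add_cos_sq x
  constructor
  · field_simp
    linear_combination (-4*y^2) * hs
  · have := sq_nonneg (z + (2*Real.sin x/(2*Real.cos x - 1))*y)
    have h2 : 0 ≤ (y - (2*Real.cos x - 1))^2/(2*Real.cos x - 1) :=
      div_nonneg (sq_nonneg _) hd.le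
    have heq : z^2 - y^2 - 2*y + ((4 - 2*Real.cos x)/(2*Real.cos x - 1)^2)*y^2
        + (4*Real.sin x/(2*Real.cos x - 1))*y*z - (1 - 2*Real.cos x)
      = (z + (2*Real.sin x/(2*Real.cos x - 1))*y)^2
        + (y - (2*Real.cos x - 1))^2/(2*Real.cos x - 1) := by
      field_simp
      linear_combination (-4*y^2) * hs
    rw [heq]; positivity
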